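/- Let Q be a finite nonempty set of vectors in ℝ^N (linear queries), σ : Q → Q' a bijection onto a set Q' of vectors in ℝ^N, with q' = σ(q). Let α ∈ (0,1), β ∈ (0,1), and assume m := 4 ln|Q|/α² is a positive integer. Let R = { y ∈ ℕ^N : ‖y‖₁ = m }, let x ∈ ℕ^N with ‖x‖₁ = n, and assume there exists y₀ ∈ R with c · max_{q'∈Q'} |⟨q',x⟩ − ⟨q',y₀⟩| ≤ (α/2)·n. Suppose c > 0 satisfies c ≤ α³n / (16 ln N · ln|Q| + 4 ln(1/β)). Let Y be the output of the small database mechanism M_{Exp,c}(x,u') over R with score u'(x,y) = −c · max_{q'∈Q'} |⟨q',x⟩ − ⟨q',y⟩|. Then with probability at least 1−β, max_{q∈Q} |⟨q,x⟩ − c⟨q',Y⟩| ≤ n · max_{q∈Q} ‖q − c·q'‖_∞ + αn. -/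

import Mathlib

open MeasureTheory Finset

/-- Two histograms `x, x'` over a universe of size `N` are `(i,j)`-neighbors:
`‖x − x'‖₁ ≤ 2`, `xᵢ ≠ x'ᵢ` and `xⱼ ≠ x'ⱼ`. -/
def Neighbors {N : ℕ} (i j : Fin N) (x x' : Fin N → ℕ) : Prop :=
  (∑ l, |(x l : ℤ) - (x' l : ℤ)|) ≤ 2 ∧ x i ≠ x' i ∧ x j ≠ x' j

/-- `dX` is a privacy budget: nonnegative, symmetric, zero on the diagonal,
satisfying the triangle inequality. -/
def PrivacyBudget {N : ℕ} (dX : Fin N → Fin N → ℝ) : Prop :=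
  (∀ i j, 0 ≤ dX i j) ∧ (∀ i j, dX i j = dX j i) ∧ (∀ i, dX i i = 0) ∧
    (∀ i j k, dX i j ≤ dX i k + dX k j)

/-- A mechanism `M` (a map from histograms to probability measures on `Y`) is `dX`-private. -/
def DXPrivate {N : ℕ} {Y : Type*} [MeasurableSpace Y]
    (dX : Fin N → Fin N → ℝ) (M : (Fin N → ℕ) → Measure Y) : Prop :=
  ∀ i j : Fin N, i ≠ j → ∀ x x' : Fin N → ℕ, Neighbors i j x x' →
    ∀ S : Set Y, MeasurableSet S →
      M x S ≤ ENNReal.ofReal (Real.exp (dX i j)) * M x' S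

/-- Utility of the small database mechanism (Theorem 4.5): letting `Y` be the output of
`SmallDB(x, Q', c, α/2)` with `c ≤ α³n / (16 ln N · ln|Q| + 4 ln(1/β))`, with probability
at least `1 − β`, `max_{q∈Q} |⟨q,x⟩ − c⟨q',Y⟩| ≤ n·max_{q∈Q} ‖q − c·q'‖∞ + αn`. -/

private lemma mc_mono (n k : ℕ) : Nat.multichoose n k ≤ Nat.multichoose (n+1) k := by
  cases k with
  | zero => simp [Nat.multichoose_zero_right]
  | succ k => rw [Nat.multichoose_succ_succ]; exact Nat.le_add_right _ _

private lemma mc_step (k n : ℕ) : Nat.multichoose n (k+1) ≤ n * Nat.multichoose n k := by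
  induction n with
  | zero => simp [Nat.multichoose_zero_succ]
  | succ n ih =>
    rw [Nat.multichoose_succ_succ, Nat.succ_mul]
    exact Nat.add_le_add (ih.trans (Nat.mul_le_mul_left n (mc_mono n k))) le_rfl

private lemma mc_le_pow (n : ℕ) : ∀ k, Nat.multichoose n k ≤ n ^ k
  | 0 => by simp [Nat.multichoose_zero_right]
  | k+1 => (mc_step k n).trans (by
      rw [pow_succ, mul_comm]
      exact Nat.mul_le_mul_right n (mc_le_pow n k))

private lemma card_R_le {N m : ℕ} (R : Finset (Fin N → ℕ))
    (hRmem : ∀ y : Fin N → ℕ, y ∈ R ↔ ∑ l, y l = m) : R.card ≤ N ^ m := by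
  classical
  have hft : Fintype {P : Fin N → ℕ // ∑ i, P i = m} :=
    Fintype.ofEquiv _ (Sym.equivNatSumOfFintype (Fin N) m)
  have h1 : R.card = Fintype.card ↥R := (Fintype.card_coe R).symm
  have h2 : Fintype.card ↥R ≤ Fintype.card {P : Fin N → ℕ // ∑ i, P i = m} := by
    apply Fintype.card_le_of_injective (fun y => ⟨y.1, (hRmem _).1 y.2⟩)
    intro a b hab
    exact Subtype.ext (congrArg (fun z : {P : Fin N → ℕ // ∑ i, P i = m} => z.1) hab)
  have h3 : Fintype.card {P : Fin N → ℕ // ∑ i, P i = m} = Fintype.card (Sym (Fin N) m) :=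
    (Fintype.card_congr (Sym.equivNatSumOfFintype (Fin N) m)).symm
  have h4 : Fintype.card (Sym (Fin N) m) = Nat.multichoose N m := by
    rw [Sym.card_sym_eq_multichoose, Fintype.card_fin]
  rw [h1]
  exact h2.trans (by rw [h3, h4]; exact mc_le_pow N m)

theorem stmt_12 {N : ℕ} (hN : 0 < N) (Q : Finset (Fin N → ℝ)) (hQ : Q.Nonempty)
    (σ : (Fin N → ℝ) → (Fin N → ℝ)) (hσ : Set.InjOn σ Q)
    (α β : ℝ) (hα : α ∈ Set.Ioo (0 : ℝ) 1) (hβ : β ∈ Set.Ioo (0 : ℝ) 1)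
    (m : ℕ) (hm : 0 < m) (hmval : (m : ℝ) = 4 * Real.log (Q.card : ℝ) / α ^ 2)
    (R : Finset (Fin N → ℕ)) (hRmem : ∀ y : Fin N → ℕ, y ∈ R ↔ ∑ l, y l = m)
    (x : Fin N → ℕ) (n : ℕ) (hn : ∑ l, x l = n)
    (c : ℝ) (hc : 0 < c)
    (hcle : c ≤ α ^ 3 * n / (16 * Real.log (N : ℝ) * Real.log (Q.card : ℝ)
        + 4 * Real.log (1 / β)))
    (u' : (Fin N → ℕ) → ℝ)
    (hu' : ∀ y : Fin N → ℕ, u' y =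
      -c * Q.sup' hQ (fun q => |(∑ l, σ q l * (x l : ℝ)) - ∑ l, σ q l * (y l : ℝ)|))
    (y₀ : Fin N → ℕ) (hy₀ : y₀ ∈ R)
    (hy₀close : c * Q.sup' hQ
        (fun q => |(∑ l, σ q l * (x l : ℝ)) - ∑ l, σ q l * (y₀ l : ℝ)|) ≤ (α / 2) * n) :
    (∑ y ∈ R.filter (fun y =>
        Q.sup' hQ (fun q => |(∑ l, q l * (x l : ℝ)) - c * ∑ l, σ q l * (y l : ℝ)|) >
          (n : ℝ) * Q.sup' hQ (fun q => ‖q - c • σ q‖) + α * n),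
      Real.exp (u' y / (2 * c))) / (∑ y ∈ R, Real.exp (u' y / (2 * c))) ≤ β := by
  classical
  obtain ⟨hα0, hα1⟩ := hα
  obtain ⟨hβ0, hβ1⟩ := hβ
  -- positivity facts
  have hlogN : 0 ≤ Real.log (N : ℝ) := Real.log_nonneg (by exact_mod_cast hN)
  have hQ1 : (1 : ℝ) ≤ (Q.card : ℝ) := by exact_mod_cast hQ.card_pos
  have hlogQ : 0 ≤ Real.log (Q.card : ℝ) := Real.log_nonneg hQ1
  have hlogβ : 0 < Real.log (1 / β) := Real.log_pos (one_lt_one_div hβ0 hβ1)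
  have hD : 0 < 16 * Real.log (N : ℝ) * Real.log (Q.card : ℝ) + 4 * Real.log (1 / β) := by
    nlinarith
  have hnpos : 0 < (n : ℝ) := by
    rcases Nat.eq_zero_or_pos n with h0 | h0
    · exfalso; rw [h0] at hcle; simp at hcle; linarith
    · exact_mod_cast h0
  -- key exponent inequality
  have hkey : (m : ℝ) * Real.log (N : ℝ) + Real.log (1 / β) ≤ α * n / (4 * c) := by
    have hα2 : 0 < α ^ 2 := by positivity
    have hcD : c * (16 * Real.log (N : ℝ) * Real.log (Q.card : ℝ) + 4 * Real.log (1 / β))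
        ≤ α ^ 3 * n := (le_div_iff₀ hD).1 hcle
    have h1 : (m : ℝ) * Real.log (N : ℝ) + Real.log (1 / β)
        ≤ (16 * Real.log (N : ℝ) * Real.log (Q.card : ℝ) + 4 * Real.log (1 / β))
          / (4 * α ^ 2) := by
      have hα2le : α ^ 2 ≤ 1 := by nlinarith
      have e : 4 * Real.log (Q.card : ℝ) / α ^ 2 * Real.log (N : ℝ) + Real.log (1 / β)
          = (16 * Real.log (N : ℝ) * Real.log (Q.card : ℝ)
            + 4 * (α ^ 2 * Real.log (1 / β))) / (4 * α ^ 2) := by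
        field_simp
        ring
      rw [hmval, e]
      gcongr
      nlinarith [hlogβ, hα2le]
    have h2 : (16 * Real.log (N : ℝ) * Real.log (Q.card : ℝ) + 4 * Real.log (1 / β))
        / (4 * α ^ 2) ≤ α * n / (4 * c) := by
      rw [div_le_div_iff₀ (by positivity) (by positivity)]
      nlinarith
    linarith
  -- each bad y has small utility
  have hbad : ∀ y ∈ R.filter (fun y =>
      Q.sup' hQ (fun q => |(∑ l, q l * (x l : ℝ)) - c * ∑ l, σ q l * (y l : ℝ)|) >
        (n : ℝ) * Q.sup' hQ (fun q => ‖q - c • σ q‖) + α * n),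
      Real.exp (u' y / (2 * c)) ≤ Real.exp (-(α * n) / (2 * c)) := by
    intro y hy
    rw [Finset.mem_filter] at hy
    obtain ⟨hyR, hygt⟩ := hy
    have hsup : Q.sup' hQ (fun q => |(∑ l, q l * (x l : ℝ)) - c * ∑ l, σ q l * (y l : ℝ)|)
        ≤ (n : ℝ) * Q.sup' hQ (fun q => ‖q - c • σ q‖) + -(u' y) := by
      apply Finset.sup'_le
      intro q hq
      have e0 : ∑ l, (q l - c * σ q l) * (x l : ℝ)
          = (∑ l, q l * (x l : ℝ)) - c * ∑ l, σ q l * (x l : ℝ) := by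
        simp [sub_mul, Finset.sum_sub_distrib, Finset.mul_sum, mul_assoc]
      have e1 : (∑ l, q l * (x l : ℝ)) - c * ∑ l, σ q l * (y l : ℝ)
          = (∑ l, (q l - c * σ q l) * (x l : ℝ))
            + c * ((∑ l, σ q l * (x l : ℝ)) - ∑ l, σ q l * (y l : ℝ)) := by
        rw [e0]; ring
      have e2 : |∑ l, (q l - c * σ q l) * (x l : ℝ)| ≤ (n : ℝ) * ‖q - c • σ q‖ := by
        calc |∑ l, (q l - c * σ q l) * (x l : ℝ)|
            ≤ ∑ l, |(q l - c * σ q l) * (x l : ℝ)| := Finset.abs_sum_le_sum_abs _ _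
          _ ≤ ∑ l, ‖q - c • σ q‖ * (x l : ℝ) := by
              apply Finset.sum_le_sum
              intro l _
              rw [abs_mul, abs_of_nonneg (by positivity : (0:ℝ) ≤ (x l : ℝ))]
              apply mul_le_mul_of_nonneg_right _ (by positivity)
              have h := norm_le_pi_norm (q - c • σ q) l
              simpa [Real.norm_eq_abs] using h
          _ = ‖q - c • σ q‖ * (n : ℝ) := by
              rw [← Finset.mul_sum, ← hn]
              push_cast
              rfl
          _ = (n : ℝ) * ‖q - c • σ q‖ := mul_comm _ _
      calc |(∑ l, q l * (x l : ℝ)) - c * ∑ l, σ q l * (y l : ℝ)|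
          ≤ |∑ l, (q l - c * σ q l) * (x l : ℝ)|
            + |c * ((∑ l, σ q l * (x l : ℝ)) - ∑ l, σ q l * (y l : ℝ))| := by
            rw [e1]; exact abs_add_le _ _
        _ ≤ (n : ℝ) * ‖q - c • σ q‖
            + c * |(∑ l, σ q l * (x l : ℝ)) - ∑ l, σ q l * (y l : ℝ)| := by
            rw [abs_mul, abs_of_pos hc]
            exact add_le_add e2 le_rfl
        _ ≤ (n : ℝ) * Q.sup' hQ (fun q => ‖q - c • σ q‖) + -(u' y) := by
            apply add_le_add
            · exact mul_le_mul_of_nonneg_left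
                (Finset.le_sup' (fun q => ‖q - c • σ q‖) hq) (Nat.cast_nonneg n)
            · rw [hu' y]
              have : -(-c * Q.sup' hQ
                  (fun q => |(∑ l, σ q l * (x l : ℝ)) - ∑ l, σ q l * (y l : ℝ)|))
                  = c * Q.sup' hQ
                  (fun q => |(∑ l, σ q l * (x l : ℝ)) - ∑ l, σ q l * (y l : ℝ)|) := by ring
              rw [this]
              exact mul_le_mul_of_nonneg_left
                (Finset.le_sup' (fun q => |(∑ l, σ q l * (x l : ℝ)) - ∑ l, σ q l * (y l : ℝ)|) hq)
                hc.le
    have hble := (Finset.le_sup' (fun q => ‖q - c • σ q‖) hQ.choose_spec)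
    have hu : u' y ≤ -(α * n) := by linarith [hygt.trans_le hsup]
    exact Real.exp_le_exp.2 ((div_le_div_iff_of_pos_right (by positivity : (0:ℝ) < 2 * c)).2 hu)
  -- denominator lower bound
  have hden : Real.exp (-(α * n) / (4 * c)) ≤ ∑ y ∈ R, Real.exp (u' y / (2 * c)) := by
    have hy₀u : -(α / 2 * n) ≤ u' y₀ := by rw [hu' y₀]; linarith [hy₀close]
    have h0 : -(α * n) / (4 * c) ≤ u' y₀ / (2 * c) := by
      have h1 : -(α / 2 * n) / (2 * c) ≤ u' y₀ / (2 * c) :=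
        (div_le_div_iff_of_pos_right (by positivity : (0:ℝ) < 2 * c)).2 hy₀u
      have h2 : -(α * n) / (4 * c) = -(α / 2 * n) / (2 * c) := by field_simp; ring
      linarith
    calc Real.exp (-(α * n) / (4 * c)) ≤ Real.exp (u' y₀ / (2 * c)) := Real.exp_le_exp.2 h0
      _ ≤ ∑ y ∈ R, Real.exp (u' y / (2 * c)) :=
        Finset.single_le_sum (f := fun y => Real.exp (u' y / (2 * c)))
          (fun y _ => (Real.exp_pos _).le) hy₀
  -- numerator upper bound
  have hcard : ((R.filter (fun y =>
      Q.sup' hQ (fun q => |(∑ l, q l * (x l : ℝ)) - c * ∑ l, σ q l * (y l : ℝ)|) >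
        (n : ℝ) * Q.sup' hQ (fun q => ‖q - c • σ q‖) + α * n)).card : ℝ) ≤ (N : ℝ) ^ m := by
    have h1 := Finset.card_filter_le R (fun y =>
      Q.sup' hQ (fun q => |(∑ l, q l * (x l : ℝ)) - c * ∑ l, σ q l * (y l : ℝ)|) >
        (n : ℝ) * Q.sup' hQ (fun q => ‖q - c • σ q‖) + α * n)
    have h2 := card_R_le R hRmem
    calc ((R.filter (fun y =>
        Q.sup' hQ (fun q => |(∑ l, q l * (x l : ℝ)) - c * ∑ l, σ q l * (y l : ℝ)|) >
          (n : ℝ) * Q.sup' hQ (fun q => ‖q - c • σ q‖) + α * n)).card : ℝ)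
        ≤ ((N ^ m : ℕ) : ℝ) := by exact_mod_cast h1.trans h2
      _ = (N : ℝ) ^ m := by push_cast; rfl
  have hnum : (∑ y ∈ R.filter (fun y =>
      Q.sup' hQ (fun q => |(∑ l, q l * (x l : ℝ)) - c * ∑ l, σ q l * (y l : ℝ)|) >
        (n : ℝ) * Q.sup' hQ (fun q => ‖q - c • σ q‖) + α * n),
      Real.exp (u' y / (2 * c))) ≤ (N : ℝ) ^ m * Real.exp (-(α * n) / (2 * c)) := by
    calc (∑ y ∈ R.filter (fun y =>
        Q.sup' hQ (fun q => |(∑ l, q l * (x l : ℝ)) - c * ∑ l, σ q l * (y l : ℝ)|) >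
          (n : ℝ) * Q.sup' hQ (fun q => ‖q - c • σ q‖) + α * n),
        Real.exp (u' y / (2 * c)))
        ≤ ∑ _y ∈ R.filter (fun y =>
          Q.sup' hQ (fun q => |(∑ l, q l * (x l : ℝ)) - c * ∑ l, σ q l * (y l : ℝ)|) >
            (n : ℝ) * Q.sup' hQ (fun q => ‖q - c • σ q‖) + α * n),
          Real.exp (-(α * n) / (2 * c)) := Finset.sum_le_sum hbad
      _ = ((R.filter (fun y =>
          Q.sup' hQ (fun q => |(∑ l, q l * (x l : ℝ)) - c * ∑ l, σ q l * (y l : ℝ)|) >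
            (n : ℝ) * Q.sup' hQ (fun q => ‖q - c • σ q‖) + α * n)).card : ℝ)
          * Real.exp (-(α * n) / (2 * c)) := by
          rw [Finset.sum_const, nsmul_eq_mul]
      _ ≤ (N : ℝ) ^ m * Real.exp (-(α * n) / (2 * c)) :=
          mul_le_mul_of_nonneg_right hcard (Real.exp_pos _).le
  -- conclude
  calc (∑ y ∈ R.filter (fun y =>
        Q.sup' hQ (fun q => |(∑ l, q l * (x l : ℝ)) - c * ∑ l, σ q l * (y l : ℝ)|) >
          (n : ℝ) * Q.sup' hQ (fun q => ‖q - c • σ q‖) + α * n),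
      Real.exp (u' y / (2 * c))) / (∑ y ∈ R, Real.exp (u' y / (2 * c)))
      ≤ ((N : ℝ) ^ m * Real.exp (-(α * n) / (2 * c))) / Real.exp (-(α * n) / (4 * c)) :=
        div_le_div₀ (by positivity) hnum (Real.exp_pos _) hden
    _ = (N : ℝ) ^ m * Real.exp (-(α * n) / (4 * c)) := by
        rw [mul_div_assoc, ← Real.exp_sub]
        congr 2
        field_simp
        ring
    _ ≤ β := by
        have hNm : ((N : ℝ)) ^ m = Real.exp (m * Real.log (N : ℝ)) := by
          rw [← Real.log_pow, Real.exp_log (by positivity)]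
        rw [hNm, ← Real.exp_add, ← Real.exp_log hβ0]
        apply Real.exp_le_exp.2
        have hlb : Real.log (1 / β) = -Real.log β := by rw [one_div, Real.log_inv]
        rw [hlb] at hkey
        rw [neg_div]
        linarith
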